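/- Let S, X₁, X₂ be finite sets, let κ₁ be a channel from S to X₁ and κ₂ a channel from S to X₂, and suppose κ₁ is a garbling of κ₂, i.e. κ₁ = λ·κ₂ for some channel λ from X₂ to X₁. Then for every probability distribution p on S, every finite action set A, and every utility function u : A × S → ℝ, the optimal expected utility satisfies U(p,u,κ₁) ≤ U(p,u,κ₂). -/
import Mathlib


open Finset

/-- A probability distribution on a finite set. -/
def IsDist {S : Type} [Fintype S] (p : S → ℝ) : Prop :=
  (∀ s, 0 ≤ p s) ∧ ∑ s, p s = 1

/-- A channel from `S` to `X`: a column-stochastic matrix. -/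
def IsChannel {S X : Type} [Fintype S] [Fintype X] (κ : X → S → ℝ) : Prop :=
  (∀ x s, 0 ≤ κ x s) ∧ ∀ s, ∑ x, κ x s = 1

/-- `κ₁` is a garbling of `κ₂` (the Blackwell order `κ₁ ⪯ κ₂`). -/
def IsGarbling {S X₁ X₂ : Type} [Fintype S] [Fintype X₁] [Fintype X₂]
    (κ₁ : X₁ → S → ℝ) (κ₂ : X₂ → S → ℝ) : Prop :=
  ∃ lam : X₁ → X₂ → ℝ, IsChannel lam ∧ ∀ x₁ s, κ₁ x₁ s = ∑ x₂, lam x₁ x₂ * κ₂ x₂ s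

/-- Optimal expected utility: maximum over decision rules `d : X → A`. -/
noncomputable def optUtility {S X A : Type} [Fintype S] [Fintype X] [Fintype A]
    (p : S → ℝ) (u : A × S → ℝ) (κ : X → S → ℝ) : ℝ :=
  ⨆ d : X → A, ∑ s, ∑ x, p s * κ x s * u (d x, s)

/-- Mutual information between input (with distribution `p`) and output of channel `κ`;
terms with `κ x s = 0` are taken to be `0`. -/
noncomputable def mutualInfo {S X : Type} [Fintype S] [Fintype X]
    (p : S → ℝ) (κ : X → S → ℝ) : ℝ :=
  ∑ s, ∑ x, if κ x s = 0 then 0 else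
    p s * κ x s * Real.log (κ x s / ∑ s', p s' * κ x s')

/-- Channel composition: `(κ·λ) x s = ∑ t, κ x t * λ t s`. -/
def chanComp {S T X : Type} [Fintype S] [Fintype T] [Fintype X]
    (κ : X → T → ℝ) (lam : T → S → ℝ) : X → S → ℝ :=
  fun x s => ∑ t, κ x t * lam t s

/-- Marginal on `S` of a joint distribution on `S × X₁ × X₂`. -/
noncomputable def margS3 {S X₁ X₂ : Type} [Fintype S] [Fintype X₁] [Fintype X₂]
    (P : S × X₁ × X₂ → ℝ) (s : S) : ℝ := ∑ x₁, ∑ x₂, P (s, x₁, x₂)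

/-- The channel `X₁ ← S` of conditional probabilities `P(X₁ = x₁ | S = s)`. -/
noncomputable def chan1of3 {S X₁ X₂ : Type} [Fintype S] [Fintype X₁] [Fintype X₂]
    (P : S × X₁ × X₂ → ℝ) (x₁ : X₁) (s : S) : ℝ :=
  (∑ x₂, P (s, x₁, x₂)) / margS3 P s

/-- The channel `X₂ ← S` of conditional probabilities `P(X₂ = x₂ | S = s)`. -/
noncomputable def chan2of3 {S X₁ X₂ : Type} [Fintype S] [Fintype X₁] [Fintype X₂]
    (P : S × X₁ × X₂ → ℝ) (x₂ : X₂) (s : S) : ℝ :=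
  (∑ x₁, P (s, x₁, x₂)) / margS3 P s

/-- Pushforward of a joint distribution on `S × X₁ × X₂` along `f : S → S'`. -/
noncomputable def push3 {S S' X₁ X₂ : Type} [Fintype S] [Fintype X₁] [Fintype X₂]
    [DecidableEq S'] (f : S → S') (P : S × X₁ × X₂ → ℝ) : S' × X₁ × X₂ → ℝ :=
  fun q => ∑ s ∈ Finset.univ.filter (fun s => f s = q.1), P (s, q.2.1, q.2.2)

/-- A garbling is never more useful: if `κ₁ = λ·κ₂` for some channel `λ`, then
for every input distribution, every finite action set and every utility function, the
optimal expected utility of `κ₁` is at most that of `κ₂`. -/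
theorem garbling_le_optUtility {S X₁ X₂ : Type} [Fintype S] [Fintype X₁] [Fintype X₂]
    (κ₁ : X₁ → S → ℝ) (κ₂ : X₂ → S → ℝ)
    (hκ₁ : IsChannel κ₁) (hκ₂ : IsChannel κ₂)
    (hgarb : IsGarbling κ₁ κ₂) :
    ∀ p : S → ℝ, IsDist p →
      ∀ (A : Type) [Fintype A] [Nonempty A] (u : A × S → ℝ),
        optUtility p u κ₁ ≤ optUtility p u κ₂ := by
  intro p hp A _ _ u
  obtain ⟨lam, ⟨hlam0, hlam1⟩, hdef⟩ := hgarb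
  unfold optUtility
  apply ciSup_le
  intro d₁
  have hmax : ∀ x₂ : X₂, ∃ a : A, ∀ b : A,
      (∑ s, p s * κ₂ x₂ s * u (b, s)) ≤ ∑ s, p s * κ₂ x₂ s * u (a, s) := by
    intro x₂
    obtain ⟨a, _, ha⟩ := Finset.exists_max_image Finset.univ
      (fun a : A => ∑ s, p s * κ₂ x₂ s * u (a, s)) univ_nonempty
    exact ⟨a, fun b => ha b (mem_univ b)⟩
  choose d₂ hd₂ using hmax
  have hb : BddAbove (Set.range fun d : X₂ → A => ∑ s, ∑ x, p s * κ₂ x s * u (d x, s)) :=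
    Set.Finite.bddAbove (Set.finite_range _)
  refine le_trans ?_ (le_ciSup hb d₂)
  have key : (∑ s, ∑ x₁, p s * κ₁ x₁ s * u (d₁ x₁, s))
      = ∑ x₂, ∑ x₁, lam x₁ x₂ * ∑ s, p s * κ₂ x₂ s * u (d₁ x₁, s) := by
    have h1 : (∑ s, ∑ x₁, p s * κ₁ x₁ s * u (d₁ x₁, s))
        = ∑ s, ∑ x₁, ∑ x₂, lam x₁ x₂ * (p s * κ₂ x₂ s * u (d₁ x₁, s)) := by
      refine Finset.sum_congr rfl fun s _ => Finset.sum_congr rfl fun x₁ _ => ?_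
      rw [hdef, Finset.mul_sum, Finset.sum_mul]
      exact Finset.sum_congr rfl fun x₂ _ => by ring
    rw [h1, Finset.sum_comm]
    refine (Finset.sum_congr rfl fun x₁ _ => Finset.sum_comm).trans ?_
    rw [Finset.sum_comm]
    exact Finset.sum_congr rfl fun x₂ _ => Finset.sum_congr rfl fun x₁ _ =>
      (Finset.mul_sum _ _ _).symm
  rw [key]
  have step : (∑ x₂, ∑ x₁, lam x₁ x₂ * ∑ s, p s * κ₂ x₂ s * u (d₁ x₁, s))
      ≤ ∑ x₂, ∑ s, p s * κ₂ x₂ s * u (d₂ x₂, s) := by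
    refine Finset.sum_le_sum fun x₂ _ => ?_
    calc (∑ x₁, lam x₁ x₂ * ∑ s, p s * κ₂ x₂ s * u (d₁ x₁, s))
        ≤ ∑ x₁, lam x₁ x₂ * ∑ s, p s * κ₂ x₂ s * u (d₂ x₂, s) := by
          refine Finset.sum_le_sum fun x₁ _ => ?_
          exact mul_le_mul_of_nonneg_left (hd₂ x₂ (d₁ x₁)) (hlam0 x₁ x₂)
      _ = (∑ x₁, lam x₁ x₂) * ∑ s, p s * κ₂ x₂ s * u (d₂ x₂, s) := by
          rw [Finset.sum_mul]
      _ = ∑ s, p s * κ₂ x₂ s * u (d₂ x₂, s) := by rw [hlam1 x₂, one_mul]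
  refine step.trans_eq ?_
  rw [Finset.sum_comm]
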